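/- The map sending a word W ∈ Θ^k_n to the pair (W', S), where W' is obtained from W by replacing each of the k letters F by oC and S ⊆ {1,…,2n} is the set of positions of those F's, is an injection from Θ^k_n into Θ^0_n × {k-element subsets of {1,…,2n}}. Moreover, its image consists exactly of the pairs (W', {i_1,…,i_k}) such that for each j, the letter of W' at position i_j is oC and the cheeseburger it removes is the topmost burger on the stack just before step i_j. -/

import Mathlib

/-!
Burger words over the five-letter alphabet {bH, bC, oH, oC, F}.

STATEMENT 1: the map sending `W ∈ Θ^k_n` to the pair `(W', S)`, where `W'`
replaces each F of `W` by oC and `S` is the set of positions of the F's, is an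
injection of Θ^k_n into Θ^0_n × (k-element subsets of positions), whose image
consists exactly of the pairs `(W', S)` with `W' ∈ Θ^0_n`, `|S| = k`, such that
at every position of `S` the letter of `W'` is oC and the top of the stack just
before that position is a cheeseburger.
-/

open scoped Classical

inductive Burger : Type
  | ham | cheese
  deriving DecidableEq

instance : Fintype Burger :=
  ⟨{Burger.ham, Burger.cheese}, by intro x; cases x <;> simp⟩

inductive Letter : Type
  | bH | bC | oH | oC | fresh
  deriving DecidableEq

instance : Fintype Letter :=
  ⟨{Letter.bH, Letter.bC, Letter.oH, Letter.oC, Letter.fresh}, by intro x; cases x <;> simp⟩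

/-- Remove the topmost burger of type `b` from the stack (the head of the list
is the top of the stack); `none` if there is no such burger. -/
def removeTopmost (b : Burger) : List Burger → Option (List Burger)
  | [] => none
  | c :: st => if c = b then some st else (removeTopmost b st).map (c :: ·)

/-- Process a single letter: productions push onto the stack, orders remove the
topmost burger of their type, and a fresh order F removes the topmost burger
regardless of type.  `none` indicates an unfulfillable order. -/
def step (st : List Burger) : Letter → Option (List Burger)
  | .bH => some (.ham :: st)
  | .bC => some (.cheese :: st)
  | .oH => removeTopmost .ham st
  | .oC => removeTopmost .cheese st
  | .fresh => st.tail?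

/-- The burger stack after processing the first `i` letters of `w`;
`none` if some order could not be fulfilled. -/
def stackAt (w : List Letter) (i : ℕ) : Option (List Burger) :=
  (w.take i).foldlM step []

/-- The top burger on the stack just before processing the letter at
(0-based) position `i` of `w`. -/
def topAt (w : List Letter) (i : ℕ) : Option Burger :=
  (stackAt w i).bind List.head?

/-- A word is perfect if every order is fulfilled and the stack ends empty. -/
def IsPerfect (w : List Letter) : Prop := stackAt w w.length = some []

/-- Membership in Θ^k_n: perfect word of length `2n` with exactly `k` letters F,
each of which removes a cheeseburger (i.e. the top of the stack just before each
F is a cheeseburger). -/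
def InTheta (k n : ℕ) (w : List Letter) : Prop :=
  w.length = 2 * n ∧ IsPerfect w ∧ w.count Letter.fresh = k ∧
    ∀ i < w.length, w[i]? = some Letter.fresh → topAt w i = some Burger.cheese

/-- Θ^k_n, encoded as a finite set of words of length `2n`. -/
noncomputable def Theta (k n : ℕ) : Finset (Fin (2 * n) → Letter) :=
  Finset.univ.filter fun w => InTheta k n (List.ofFn w)


/-- Replace every F in the word by an oC. -/
def replaceF {N : ℕ} (w : Fin N → Letter) : Fin N → Letter :=
  fun i => if w i = Letter.fresh then Letter.oC else w i

/-- The set of positions of the letters F. -/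
noncomputable def freshPositions {N : ℕ} (w : Fin N → Letter) : Finset (Fin N) :=
  Finset.univ.filter fun i => w i = Letter.fresh

lemma stackAt_succ (w : List Letter) {i : ℕ} {l : Letter} (h : w[i]? = some l) :
    stackAt w (i + 1) = (stackAt w i).bind (fun st => step st l) := by
  unfold stackAt
  rw [List.take_succ, h, List.foldlM_append]
  simp

lemma count_ofFn {N : ℕ} (f : Fin N → Letter) (a : Letter) :
    (List.ofFn f).count a = (Finset.univ.filter fun i => f i = a).card := by
  rw [List.ofFn_eq_map, List.count_eq_countP, List.countP_map]
  rw [Fin.univ_def]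
  simp [Finset.filter, Finset.card, List.countP_eq_length_filter]
  congr 1

lemma stacks_eq (w1 w2 : List Letter) (hlen : w1.length = w2.length)
    (hag : ∀ i : ℕ, w1[i]? = w2[i]? ∨ (w1[i]? = some Letter.fresh ∧ w2[i]? = some Letter.oC))
    (htop : ∀ i : ℕ, w1[i]? = some Letter.fresh → w2[i]? = some Letter.oC →
      topAt w1 i = some Burger.cheese ∨ topAt w2 i = some Burger.cheese) :
    ∀ i, stackAt w2 i = stackAt w1 i := by
  intro i
  induction i with
  | zero => simp [stackAt]
  | succ i ih =>
    by_cases hi : i < w1.length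
    · have hl1 : w1[i]? = some w1[i] := List.getElem?_eq_getElem hi
      rcases hag i with h | ⟨hf, hc⟩
      · rw [stackAt_succ w1 hl1, stackAt_succ w2 (h ▸ hl1), ih]
      · rw [stackAt_succ w1 hf, stackAt_succ w2 hc, ih]
        have htop1 : topAt w1 i = some Burger.cheese := by
          rcases htop i hf hc with h | h
          · exact h
          · unfold topAt at h ⊢
            rwa [ih] at h
        unfold topAt at htop1
        cases hst : stackAt w1 i with
        | none => simp
        | some st =>
          rw [hst] at htop1
          cases st with
          | nil => simp at htop1
          | cons b rest =>
            simp at htop1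
            subst htop1
            simp [step, removeTopmost]
    · have h1 : w1.take (i+1) = w1.take i := by
        rw [List.take_of_length_le (by omega), List.take_of_length_le (by omega)]
      have h2 : w2.take (i+1) = w2.take i := by
        rw [List.take_of_length_le (by omega), List.take_of_length_le (by omega)]
      unfold stackAt
      unfold stackAt at ih
      rw [h1, h2, ih]

lemma replaceF_ne_fresh {N : ℕ} (w : Fin N → Letter) (i : Fin N) :
    replaceF w i ≠ Letter.fresh := by
  unfold replaceF
  split <;> simp_all

lemma mem_Theta {k n : ℕ} {w : Fin (2*n) → Letter} :
    w ∈ Theta k n ↔ InTheta k n (List.ofFn w) := by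
  simp [Theta]

/-- stacks of `ofFn w` and `ofFn (replaceF w)` agree, given top-cheese at fresh positions. -/
lemma stacks_eq_replaceF {n : ℕ} (w : Fin (2*n) → Letter)
    (htop : ∀ i < (List.ofFn w).length, (List.ofFn w)[i]? = some Letter.fresh →
      topAt (List.ofFn w) i = some Burger.cheese) :
    ∀ i, stackAt (List.ofFn (replaceF w)) i = stackAt (List.ofFn w) i := by
  apply stacks_eq
  · simp
  · intro i
    rcases lt_or_ge i (2*n) with hi | hi
    · simp only [List.getElem?_ofFn, List.ofFnNthVal, dif_pos hi]
      by_cases h : w ⟨i, hi⟩ = Letter.fresh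
      · right; simp [replaceF, h]
      · left; simp [replaceF, h]
    · simp [List.getElem?_ofFn, List.ofFnNthVal, dif_neg (not_lt.2 hi)]
  · intro i hf _
    left
    have hi : i < (List.ofFn w).length := by
      by_contra h
      rw [List.getElem?_eq_none (by omega)] at hf
      simp at hf
    exact htop i hi hf

theorem replaceF_injection_and_image (n k : ℕ) :
    Set.InjOn (fun w => (replaceF w, freshPositions w))
      (Theta k n : Set (Fin (2 * n) → Letter)) ∧
    (fun w => (replaceF w, freshPositions w)) ''
        (Theta k n : Set (Fin (2 * n) → Letter)) =
      {p : (Fin (2 * n) → Letter) × Finset (Fin (2 * n)) |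
        p.1 ∈ Theta 0 n ∧ p.2.card = k ∧
        ∀ i ∈ p.2, p.1 i = Letter.oC ∧
          topAt (List.ofFn p.1) (i : ℕ) = some Burger.cheese} := by
  constructor
  · -- injectivity
    intro w1 _ w2 _ heq
    simp only [Prod.mk.injEq] at heq
    obtain ⟨hrep, hpos⟩ := heq
    funext i
    by_cases h1 : w1 i = Letter.fresh
    · have : i ∈ freshPositions w1 := by simp [freshPositions, h1]
      rw [hpos] at this
      simp [freshPositions] at this
      rw [h1, this]
    · have : i ∉ freshPositions w1 := by simp [freshPositions, h1]
      rw [hpos] at this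
      simp [freshPositions] at this
      have e1 : replaceF w1 i = w1 i := by simp [replaceF, h1]
      have e2 : replaceF w2 i = w2 i := by simp [replaceF, this]
      rw [← e1, ← e2, hrep]
  · ext ⟨v, S⟩
    simp only [Set.mem_image, Set.mem_setOf_eq, Finset.mem_coe, Prod.mk.injEq]
    constructor
    · rintro ⟨w, hw, hv, hS⟩
      subst hv; subst hS
      rw [mem_Theta] at hw
      obtain ⟨hlen, hperf, hcount, htopw⟩ := hw
      have hstacks := stacks_eq_replaceF w htopw
      refine ⟨?_, ?_, ?_⟩
      · rw [mem_Theta]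
        refine ⟨by simp, ?_, ?_, ?_⟩
        · unfold IsPerfect at hperf ⊢
          rw [List.length_ofFn] at hperf ⊢
          rw [hstacks]
          exact hperf
        · rw [List.count_eq_zero]
          intro hmem
          rw [List.mem_ofFn] at hmem
          obtain ⟨i, hi⟩ := hmem
          exact replaceF_ne_fresh w i hi
        · intro i hi hfi
          exfalso
          rw [List.length_ofFn] at hi
          rw [List.getElem?_ofFn, dif_pos hi] at hfi
          exact replaceF_ne_fresh w ⟨i, hi⟩ (by injection hfi)
      · rw [count_ofFn] at hcount
        exact hcount
      · intro i hi
        simp only [freshPositions, Finset.mem_filter] at hi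
        refine ⟨by simp [replaceF, hi.2], ?_⟩
        unfold topAt
        rw [hstacks]
        apply htopw
        · simp [i.isLt]
        · simp [List.getElem?_ofFn, List.ofFnNthVal, dif_pos i.isLt, hi.2]
    · rintro ⟨hv, hcard, hS⟩
      rw [mem_Theta] at hv
      obtain ⟨hlenv, hperfv, hcount0, _⟩ := hv
      have hvfresh : ∀ i, v i ≠ Letter.fresh := by
        intro i hi
        have : Letter.fresh ∈ List.ofFn v := by
          rw [List.mem_ofFn]; exact ⟨i, hi⟩
        exact List.count_eq_zero.1 hcount0 this
      set w : Fin (2*n) → Letter := fun i => if i ∈ S then Letter.fresh else v i with hwdef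
      have hrep : replaceF w = v := by
        funext i
        by_cases h : i ∈ S
        · simp [replaceF, hwdef, h, (hS i h).1]
        · simp [replaceF, hwdef, h, hvfresh i]
      have hpos : freshPositions w = S := by
        ext i
        by_cases h : i ∈ S <;> simp [freshPositions, hwdef, h, hvfresh i]
      -- stacks equal
      have hstacks : ∀ i, stackAt (List.ofFn v) i = stackAt (List.ofFn w) i := by
        apply stacks_eq
        · simp
        · intro i
          rcases lt_or_ge i (2*n) with hi | hi
          · simp only [List.getElem?_ofFn, List.ofFnNthVal, dif_pos hi]
            by_cases h : (⟨i, hi⟩ : Fin (2*n)) ∈ S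
            · right; simp [hwdef, h, (hS _ h).1]
            · left; simp [hwdef, h]
          · simp [List.getElem?_ofFn, List.ofFnNthVal, dif_neg (not_lt.2 hi)]
        · intro i hf _
          have hi : i < 2*n := by
            by_contra h
            rw [List.getElem?_eq_none (by simp; omega)] at hf
            simp at hf
          rw [List.getElem?_ofFn, dif_pos hi] at hf
          have hmem : (⟨i, hi⟩ : Fin (2*n)) ∈ S := by
            by_contra h
            simp [hwdef, h] at hf
            exact hvfresh _ hf
          right
          exact (hS _ hmem).2
      refine ⟨w, ?_, hrep, hpos⟩
      rw [mem_Theta]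
      refine ⟨by simp, ?_, ?_, ?_⟩
      · unfold IsPerfect at hperfv ⊢
        rw [List.length_ofFn] at hperfv ⊢
        rw [← hstacks]
        exact hperfv
      · rw [count_ofFn]
        rw [show (Finset.univ.filter fun i => w i = Letter.fresh) = freshPositions w from rfl, hpos]
        exact hcard
      · intro i hi hfi
        rw [List.length_ofFn] at hi
        rw [List.getElem?_ofFn, dif_pos hi] at hfi
        have hmem : (⟨i, hi⟩ : Fin (2*n)) ∈ S := by
          by_contra h
          simp [hwdef, h] at hfi
          exact hvfresh _ hfi
        unfold topAt
        rw [← hstacks]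
        exact (hS _ hmem).2
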